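/- Let X be a metric space, x ∈ X, φ : X → ℝⁿ Lipschitz with Lip(⟨v,φ⟩; x) > 0 for all nonzero v ∈ ℝⁿ, Y a Banach space, and f : X → Y a function. If for every ε > 0 there is a linear map T_ε : ℝⁿ → Y with Lip(f − T_ε∘φ; x) ≤ ε, then there is a unique linear T : ℝⁿ → Y with Lip(f − T∘φ; x) = 0. -/

import Mathlib

open Filter
open scoped ENNReal NNReal Topology

section Helpers

lemma limsup_add_le'' {α : Type*} {f : Filter α} (u v : α → ℝ≥0∞) :
    limsup (fun a => u a + v a) f ≤ limsup u f + limsup v f := by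
  by_cases hA : limsup u f = ⊤
  · rw [hA, top_add]; exact le_top
  by_cases hB : limsup v f = ⊤
  · rw [hB, add_top]; exact le_top
  refine ENNReal.le_of_forall_pos_le_add fun ε hε _ => ?_
  have hε2 : ((ε : ℝ≥0∞) / 2) ≠ 0 := by
    simp [ENNReal.div_eq_zero_iff, hε.ne']
  have hu : ∀ᶠ a in f, u a < limsup u f + (ε : ℝ≥0∞) / 2 :=
    eventually_lt_of_limsup_lt (ENNReal.lt_add_right hA hε2)
  have hv : ∀ᶠ a in f, v a < limsup v f + (ε : ℝ≥0∞) / 2 :=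
    eventually_lt_of_limsup_lt (ENNReal.lt_add_right hB hε2)
  refine limsup_le_of_le (by isBoundedDefault) ?_
  filter_upwards [hu, hv] with a ha hb
  calc u a + v a ≤ (limsup u f + (ε : ℝ≥0∞) / 2) + (limsup v f + (ε : ℝ≥0∞) / 2) :=
        add_le_add ha.le hb.le
    _ = limsup u f + limsup v f + ((ε : ℝ≥0∞) / 2 + (ε : ℝ≥0∞) / 2) := by ring
    _ = limsup u f + limsup v f + ε := by rw [ENNReal.add_halves]

lemma edist_eq_coe_nnnorm_sub {E : Type*} [SeminormedAddCommGroup E] (a b : E) :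
    edist a b = (‖a - b‖₊ : ℝ≥0∞) := by
  rw [edist_nndist, nndist_eq_nnnorm]

lemma ofReal_norm_eq_coe_nnnorm {E : Type*} [SeminormedAddCommGroup E] (a : E) :
    ENNReal.ofReal ‖a‖ = (‖a‖₊ : ℝ≥0∞) := by
  rw [← coe_nnnorm, ENNReal.ofReal_coe_nnreal]

end Helpers

/-- The pointwise Lipschitz constant `Lip(f; x)`. -/
noncomputable def pLip {X Y : Type*} [MetricSpace X] [MetricSpace Y]
    (f : X → Y) (x : X) : ℝ≥0∞ :=
  Filter.limsup (fun y => edist (f x) (f y) / edist x y) (𝓝[≠] x)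

section PlipLemmas

variable {X : Type*} [MetricSpace X]

lemma plip_mono {Y Z : Type*} [MetricSpace Y] [MetricSpace Z] {g : X → Y} {h : X → Z} {x : X}
    (hpt : ∀ y, edist (g x) (g y) ≤ edist (h x) (h y)) : pLip g x ≤ pLip h x :=
  limsup_le_limsup (Eventually.of_forall fun y => ENNReal.div_le_div_right (hpt y) _)

lemma plip_le_add {Y Z W : Type*} [MetricSpace Y] [MetricSpace Z] [MetricSpace W]
    {g : X → Y} {h₁ : X → Z} {h₂ : X → W} {x : X}
    (hpt : ∀ y, edist (g x) (g y) ≤ edist (h₁ x) (h₁ y) + edist (h₂ x) (h₂ y)) :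
    pLip g x ≤ pLip h₁ x + pLip h₂ x := by
  calc pLip g x
      ≤ limsup (fun y => edist (h₁ x) (h₁ y) / edist x y + edist (h₂ x) (h₂ y) / edist x y)
        (𝓝[≠] x) := by
        refine limsup_le_limsup (Eventually.of_forall fun y => ?_)
        simp only []
        show edist (g x) (g y) / edist x y
          ≤ edist (h₁ x) (h₁ y) / edist x y + edist (h₂ x) (h₂ y) / edist x y
        rw [← ENNReal.add_div]
        exact ENNReal.div_le_div_right (hpt y) _
    _ ≤ pLip h₁ x + pLip h₂ x := limsup_add_le'' _ _

lemma plip_le_of_lip {Y : Type*} [MetricSpace Y] {g : X → Y} {K : ℝ≥0}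
    (hg : LipschitzWith K g) (x : X) : pLip g x ≤ K := by
  refine limsup_le_of_le (by isBoundedDefault) ?_
  filter_upwards [self_mem_nhdsWithin] with y (hy : y ≠ x)
  rw [ENNReal.div_le_iff (by simpa [edist_eq_zero] using (Ne.symm hy)) (edist_ne_top x y)]
  exact hg x y

lemma plip_smul {n : ℕ} (x : X) (φ : X → EuclideanSpace ℝ (Fin n))
    (v : EuclideanSpace ℝ (Fin n)) (r : ℝ≥0) :
    pLip (fun y => (inner ℝ ((r : ℝ) • v) (φ y) : ℝ)) x
      = (r : ℝ≥0∞) * pLip (fun y => (inner ℝ v (φ y) : ℝ)) x := by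
  rw [pLip, pLip, ← ENNReal.limsup_const_mul_of_ne_top ENNReal.coe_ne_top]
  congr 1
  funext y
  rw [← mul_div_assoc]
  congr 1
  have h1 : ∀ z, (inner ℝ ((r : ℝ) • v) z : ℝ) = (r : ℝ) * inner ℝ v z := fun z =>
    real_inner_smul_left v z r
  rw [h1, h1, edist_eq_coe_nnnorm_sub, edist_eq_coe_nnnorm_sub, ← mul_sub, nnnorm_mul]
  push_cast
  congr 1
  simp

lemma vec_lower {n : ℕ} (x : X) (φ : X → EuclideanSpace ℝ (Fin n)) (K : ℝ≥0)
    (hφ : LipschitzWith K φ)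
    (hnd : ∀ v : EuclideanSpace ℝ (Fin n), v ≠ 0 →
      0 < pLip (fun y => (inner ℝ v (φ y) : ℝ)) x) :
    ∃ c : ℝ≥0, 0 < c ∧ ∀ w : EuclideanSpace ℝ (Fin n),
      (c : ℝ≥0∞) * ‖w‖₊ ≤ pLip (fun y => (inner ℝ w (φ y) : ℝ)) x := by
  set F : EuclideanSpace ℝ (Fin n) → ℝ≥0∞ := fun v => pLip (fun y => (inner ℝ v (φ y) : ℝ)) x
    with hF
  have hlip : ∀ v : EuclideanSpace ℝ (Fin n), LipschitzWith (‖v‖₊ * K)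
      fun y => (inner ℝ v (φ y) : ℝ) := by
    intro v
    have h1 : LipschitzWith ‖v‖₊ fun z : EuclideanSpace ℝ (Fin n) => (inner ℝ v z : ℝ) := by
      refine LipschitzWith.of_dist_le_mul fun a b => ?_
      rw [dist_eq_norm, ← inner_sub_right]
      exact (abs_real_inner_le_norm v (a - b)).trans (by
        rw [← dist_eq_norm]; exact le_rfl)
    exact h1.comp hφ
  have hFfin : ∀ v : EuclideanSpace ℝ (Fin n), F v ≠ ⊤ := fun v =>
    ((plip_le_of_lip (hlip v) x).trans_lt ENNReal.coe_lt_top).ne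
  have hFsub : ∀ v w : EuclideanSpace ℝ (Fin n), F v ≤ F w + ((K : ℝ≥0∞) * ‖v - w‖₊) := by
    intro v w
    have h1 : F v ≤ F w + F (v - w) := by
      refine plip_le_add fun y => ?_
      simp only [edist_eq_coe_nnnorm_sub, ← ENNReal.coe_add]
      rw [ENNReal.coe_le_coe]
      have : (inner ℝ v (φ x) : ℝ) - inner ℝ v (φ y)
          = ((inner ℝ w (φ x) : ℝ) - inner ℝ w (φ y))
            + ((inner ℝ (v - w) (φ x) : ℝ) - inner ℝ (v - w) (φ y)) := by
        simp [inner_sub_left]; ring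
      rw [this]
      exact nnnorm_add_le _ _
    refine h1.trans (add_le_add le_rfl ?_)
    calc F (v - w) ≤ ((‖v - w‖₊ * K : ℝ≥0) : ℝ≥0∞) := plip_le_of_lip (hlip (v - w)) x
      _ = (K : ℝ≥0∞) * ‖v - w‖₊ := by push_cast; ring
  set G : EuclideanSpace ℝ (Fin n) → ℝ := fun v => (F v).toReal with hG
  have hGlip : LipschitzWith K G := by
    refine LipschitzWith.of_dist_le_mul fun v w => ?_
    rw [Real.dist_eq, abs_sub_le_iff]
    constructor
    · have := ENNReal.toReal_le_add (hFsub v w) (hFfin w)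
        (ENNReal.mul_ne_top ENNReal.coe_ne_top ENNReal.coe_ne_top)
      rw [sub_le_iff_le_add]
      refine this.trans ?_
      rw [add_comm]
      gcongr
      simp [dist_eq_norm, ENNReal.toReal_mul]
    · have := ENNReal.toReal_le_add (hFsub w v) (hFfin v)
        (ENNReal.mul_ne_top ENNReal.coe_ne_top ENNReal.coe_ne_top)
      rw [sub_le_iff_le_add]
      refine this.trans ?_
      rw [add_comm]
      gcongr
      simp [dist_eq_norm', ENNReal.toReal_mul]
  rcases isEmpty_or_nonempty (Fin n) with hn | hn
  · refine ⟨1, one_pos, fun w => ?_⟩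
    have hw : w = 0 := Subsingleton.elim w 0
    simp [hw]
  · have hsph : (Metric.sphere (0 : EuclideanSpace ℝ (Fin n)) 1).Nonempty :=
      NormedSpace.sphere_nonempty.mpr zero_le_one
    obtain ⟨v₀, hv₀S, hv₀min⟩ := (isCompact_sphere (0 : EuclideanSpace ℝ (Fin n)) 1).exists_isMinOn
      hsph hGlip.continuous.continuousOn
    have hv₀norm : ‖v₀‖ = 1 := mem_sphere_zero_iff_norm.mp hv₀S
    have hv₀pos : 0 < G v₀ := by
      refine ENNReal.toReal_pos (hnd v₀ ?_).ne' (hFfin v₀)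
      intro h0; rw [h0] at hv₀norm; simp at hv₀norm
    refine ⟨(G v₀).toNNReal, by simpa using hv₀pos, fun w => ?_⟩
    rcases eq_or_ne w 0 with rfl | hw
    · simp
    · set r : ℝ≥0 := ‖w‖₊ with hr
      have hrpos : (0:ℝ) < r := by simpa [hr] using norm_pos_iff.mpr hw
      set u : EuclideanSpace ℝ (Fin n) := (r : ℝ)⁻¹ • w with hu
      have huS : u ∈ Metric.sphere (0 : EuclideanSpace ℝ (Fin n)) 1 := by
        rw [mem_sphere_zero_iff_norm, hu, norm_smul]
        simp [abs_of_pos (inv_pos.mpr hrpos), hr]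
        rw [inv_mul_cancel₀ (by simpa [hr] using hrpos.ne')]
      have hwu : w = (r : ℝ) • u := by
        rw [hu, smul_smul, mul_inv_cancel₀ hrpos.ne', one_smul]
      have hhom : F w = (r : ℝ≥0∞) * F u := by
        rw [hF]
        simp only []
        rw [show (fun y => (inner ℝ w (φ y) : ℝ)) = fun y => (inner ℝ ((r:ℝ) • u) (φ y) : ℝ) by
          rw [← hwu]]
        exact plip_smul x φ u r
      have hFu : (ENNReal.ofReal (G v₀)) ≤ F u := by
        rw [← ENNReal.ofReal_toReal (hFfin u)]
        exact ENNReal.ofReal_le_ofReal (hv₀min huS)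
      calc ((G v₀).toNNReal : ℝ≥0∞) * ‖w‖₊
          = (r : ℝ≥0∞) * ENNReal.ofReal (G v₀) := by
            rw [mul_comm, ENNReal.ofReal, hr]
        _ ≤ (r : ℝ≥0∞) * F u := by gcongr
        _ = F w := hhom.symm

lemma op_lower {n : ℕ} (x : X) (φ : X → EuclideanSpace ℝ (Fin n))
    {Y : Type*} [NormedAddCommGroup Y] [NormedSpace ℝ Y] (c : ℝ≥0)
    (hc : ∀ w : EuclideanSpace ℝ (Fin n),
      (c : ℝ≥0∞) * ‖w‖₊ ≤ pLip (fun y => (inner ℝ w (φ y) : ℝ)) x)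
    (T : EuclideanSpace ℝ (Fin n) →L[ℝ] Y) :
    (c : ℝ≥0∞) * ‖T‖₊ ≤ pLip (fun y => T (φ y)) x := by
  have step : ∀ r : ℝ, r < ‖T‖ → ENNReal.ofReal ((c:ℝ) * r) ≤ pLip (fun y => T (φ y)) x := by
    intro r hr
    rcases le_or_gt r 0 with hr0 | hr0
    · rw [ENNReal.ofReal_eq_zero.mpr (by nlinarith [c.coe_nonneg])]
      exact zero_le
    · obtain ⟨u, hu1, hur⟩ := T.exists_lt_apply_of_lt_opNorm hr
      have hTu : T u ≠ 0 := by
        intro h0; rw [h0, norm_zero] at hur; linarith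
      obtain ⟨ξ, hξ1, hξTu⟩ := exists_dual_vector ℝ (T u) (norm_ne_zero_iff.mpr hTu)
      set w := (InnerProductSpace.toDual ℝ (EuclideanSpace ℝ (Fin n))).symm (ξ.comp T) with hwdef
      have hwz : ∀ z, (inner ℝ w z : ℝ) = ξ (T z) := fun z =>
        InnerProductSpace.toDual_symm_apply
      have hwnorm : r < ‖w‖ := by
        have h1 : (inner ℝ w u : ℝ) = ‖T u‖ := by rw [hwz]; exact_mod_cast hξTu
        have h2 : (inner ℝ w u : ℝ) ≤ ‖w‖ * ‖u‖ := real_inner_le_norm w u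
        nlinarith [mul_le_of_le_one_right (norm_nonneg w) hu1.le]
      have hmono : pLip (fun y => (inner ℝ w (φ y) : ℝ)) x ≤ pLip (fun y => T (φ y)) x := by
        refine plip_mono fun y => ?_
        simp only [edist_eq_coe_nnnorm_sub, ENNReal.coe_le_coe, ← NNReal.coe_le_coe,
          coe_nnnorm]
        rw [hwz, hwz, show ξ (T (φ x)) - ξ (T (φ y)) = ξ (T (φ x) - T (φ y)) by simp]
        calc ‖ξ (T (φ x) - T (φ y))‖ ≤ ‖ξ‖ * ‖T (φ x) - T (φ y)‖ := ξ.le_opNorm _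
          _ = ‖T (φ x) - T (φ y)‖ := by rw [hξ1, one_mul]
      calc ENNReal.ofReal ((c:ℝ) * r)
          = (c : ℝ≥0∞) * ENNReal.ofReal r := by
            rw [ENNReal.ofReal_mul c.coe_nonneg, ENNReal.ofReal_coe_nnreal]
        _ ≤ (c : ℝ≥0∞) * ‖w‖₊ := by
            gcongr
            rw [← ofReal_norm_eq_coe_nnnorm]
            exact ENNReal.ofReal_le_ofReal hwnorm.le
        _ ≤ pLip (fun y => (inner ℝ w (φ y) : ℝ)) x := hc w
        _ ≤ _ := hmono
  rcases eq_or_lt_of_le (norm_nonneg T) with h0 | h0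
  · have hT0 : ‖T‖₊ = 0 := by
      ext; simp [← h0]
    simp [hT0]
  · have htend : Tendsto (fun k : ℕ => ENNReal.ofReal ((c:ℝ) * (‖T‖ - 1/(k+1)))) atTop
        (𝓝 (ENNReal.ofReal ((c:ℝ) * ‖T‖))) := by
      refine (ENNReal.continuous_ofReal.tendsto _).comp ?_
      have h1 : Tendsto (fun k : ℕ => ‖T‖ - 1/(k+1)) atTop (𝓝 ‖T‖) := by
        have := (tendsto_one_div_add_atTop_nhds_zero_nat :
          Tendsto (fun k : ℕ => (1:ℝ)/(k+1)) atTop (𝓝 0))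
        have h2 := tendsto_const_nhds (x := ‖T‖) (f := atTop (α := ℕ)) |>.sub this
        simpa using h2
      exact tendsto_const_nhds.mul h1
    have hle := le_of_tendsto htend (Eventually.of_forall fun k => step _ (by
      have : (0:ℝ) < 1/(k+1) := by positivity
      linarith))
    calc (c:ℝ≥0∞) * ‖T‖₊ = ENNReal.ofReal ((c:ℝ) * ‖T‖) := by
          rw [ENNReal.ofReal_mul c.coe_nonneg, ENNReal.ofReal_coe_nnreal,
            ofReal_norm_eq_coe_nnnorm]
      _ ≤ _ := hle

end PlipLemmas


/-- If `φ : X → ℝⁿ` is Lipschitz, nondegenerate at `x`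
(`Lip(⟨v,φ⟩; x) > 0` for all `v ≠ 0`), `Y` is a Banach space, and for every `ε > 0` there
is a linear `T_ε` with `Lip(f − T_ε ∘ φ; x) ≤ ε`, then there is a unique linear `T` with
`Lip(f − T ∘ φ; x) = 0`. -/
theorem stmt16 {X : Type*} [MetricSpace X] (x : X) (n : ℕ)
    (φ : X → EuclideanSpace ℝ (Fin n)) (K : ℝ≥0) (hφ : LipschitzWith K φ)
    (hnd : ∀ v : EuclideanSpace ℝ (Fin n), v ≠ 0 →
      0 < pLip (fun y => (inner ℝ v (φ y) : ℝ)) x)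
    {Y : Type*} [NormedAddCommGroup Y] [NormedSpace ℝ Y] [CompleteSpace Y]
    (f : X → Y)
    (h : ∀ ε : ℝ, 0 < ε → ∃ T : EuclideanSpace ℝ (Fin n) →L[ℝ] Y,
      pLip (fun y => f y - T (φ y)) x ≤ ENNReal.ofReal ε) :
    ∃! T : EuclideanSpace ℝ (Fin n) →L[ℝ] Y,
      pLip (fun y => f y - T (φ y)) x = 0 := by
  obtain ⟨c, hcpos, hcw⟩ := vec_lower x φ K hφ hnd
  have hcT : ∀ T : EuclideanSpace ℝ (Fin n) →L[ℝ] Y,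
      (c : ℝ≥0∞) * ‖T‖₊ ≤ pLip (fun y => T (φ y)) x := op_lower x φ c hcw
  -- subadditivity key
  have key : ∀ S T : EuclideanSpace ℝ (Fin n) →L[ℝ] Y,
      (c : ℝ≥0∞) * ‖S - T‖₊
        ≤ pLip (fun y => f y - T (φ y)) x + pLip (fun y => f y - S (φ y)) x := by
    intro S T
    refine (hcT (S - T)).trans (plip_le_add fun y => ?_)
    simp only [edist_eq_coe_nnnorm_sub, ← ENNReal.coe_add, ENNReal.coe_le_coe]
    have hrw : (S - T) (φ x) - (S - T) (φ y)
        = ((f x - T (φ x)) - (f y - T (φ y))) - ((f x - S (φ x)) - (f y - S (φ y))) := by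
      simp only [ContinuousLinearMap.sub_apply]
      abel
    rw [hrw]
    exact nnnorm_sub_le _ _
  -- real-valued distance bound
  have keyR : ∀ (S T : EuclideanSpace ℝ (Fin n) →L[ℝ] Y) (ε₁ ε₂ : ℝ), 0 ≤ ε₁ → 0 ≤ ε₂ →
      pLip (fun y => f y - T (φ y)) x ≤ ENNReal.ofReal ε₁ →
      pLip (fun y => f y - S (φ y)) x ≤ ENNReal.ofReal ε₂ →
      ‖S - T‖ ≤ (ε₁ + ε₂) / c := by
    intro S T ε₁ ε₂ hε₁ hε₂ hT hS
    have h1 : (c : ℝ≥0∞) * ‖S - T‖₊ ≤ ENNReal.ofReal (ε₁ + ε₂) := by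
      rw [ENNReal.ofReal_add hε₁ hε₂]
      exact (key S T).trans (add_le_add hT hS)
    have h2 : ENNReal.ofReal ((c : ℝ) * ‖S - T‖) ≤ ENNReal.ofReal (ε₁ + ε₂) := by
      rwa [ENNReal.ofReal_mul c.coe_nonneg, ENNReal.ofReal_coe_nnreal,
        ofReal_norm_eq_coe_nnnorm]
    have h3 : (c : ℝ) * ‖S - T‖ ≤ ε₁ + ε₂ :=
      (ENNReal.ofReal_le_ofReal_iff (by linarith)).mp h2
    rw [le_div_iff₀ (by exact_mod_cast hcpos)]
    linarith
  -- the approximating sequence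
  have hpos : ∀ k : ℕ, (0:ℝ) < 1/(k+1) := fun k => by positivity
  set Tk : ℕ → EuclideanSpace ℝ (Fin n) →L[ℝ] Y := fun k => (h (1/(k+1)) (hpos k)).choose
    with hTkdef
  have hTk : ∀ k : ℕ, pLip (fun y => f y - Tk k (φ y)) x ≤ ENNReal.ofReal (1/(k+1)) :=
    fun k => (h (1/(k+1)) (hpos k)).choose_spec
  -- Cauchy
  have hcauchy : CauchySeq Tk := by
    refine cauchySeq_of_le_tendsto_0 (fun N => 2/((N+1) * c)) (fun k m N hk hm => ?_) ?_
    · rw [dist_eq_norm]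
      have hb : ∀ j : ℕ, N ≤ j → (1:ℝ)/(j+1) ≤ 1/(N+1) := fun j hj => by
        apply one_div_le_one_div_of_le (by positivity)
        have : (N:ℝ) ≤ j := by exact_mod_cast hj
        linarith
      refine (keyR (Tk k) (Tk m) _ _ (hpos m).le (hpos k).le (hTk m) (hTk k)).trans ?_
      rw [div_le_div_iff₀ (by exact_mod_cast hcpos) (by positivity)]
      have h1 := hb m hm
      have h2 := hb k hk
      have hc0 : (0:ℝ) < c := by exact_mod_cast hcpos
      have hN : (0:ℝ) < N + 1 := by positivity
      rw [mul_comm ((N:ℝ)+1) (c:ℝ)]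
      have : (1/((m:ℝ)+1) + 1/((k:ℝ)+1)) ≤ 2 * (1/((N:ℝ)+1)) := by linarith
      calc (1/((m:ℝ)+1) + 1/((k:ℝ)+1)) * ((c:ℝ) * ((N:ℝ)+1))
          ≤ 2 * (1/((N:ℝ)+1)) * ((c:ℝ) * ((N:ℝ)+1)) := by
            apply mul_le_mul_of_nonneg_right this (by positivity)
        _ = 2 * (c:ℝ) * (((N:ℝ)+1) * (1/((N:ℝ)+1))) := by ring
        _ = 2 * (c:ℝ) := by rw [mul_one_div_cancel hN.ne']; ring
    · have h1 : Tendsto (fun N : ℕ => (1:ℝ)/(N+1)) atTop (𝓝 0) :=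
        tendsto_one_div_add_atTop_nhds_zero_nat
      have h2 : Tendsto (fun N : ℕ => 2/((N:ℝ)+1) * (1/(c:ℝ))) atTop (𝓝 (0 * (1/(c:ℝ)))) := by
        refine Tendsto.mul_const _ ?_
        have := h1.const_mul (2:ℝ)
        simpa [mul_one_div, div_eq_mul_inv] using this
      have heq : (fun N : ℕ => 2/(((N:ℝ)+1) * c)) = fun N : ℕ => 2/((N:ℝ)+1) * (1/(c:ℝ)) := by
        funext N; field_simp
      rw [heq]
      simpa using h2
  obtain ⟨T, hTlim⟩ := cauchySeq_tendsto_of_complete hcauchy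
  -- T works
  have hT0 : pLip (fun y => f y - T (φ y)) x = 0 := by
    refine le_antisymm ?_ (zero_le)
    refine ENNReal.le_of_forall_pos_le_add fun ε hε _ => ?_
    rw [zero_add]
    have hεhalf : (0:ℝ) < (ε:ℝ)/2 := by positivity
    have hev1 : ∀ᶠ k : ℕ in atTop, (1:ℝ)/(k+1) ≤ (ε:ℝ)/2 := by
      have := (tendsto_one_div_add_atTop_nhds_zero_nat :
        Tendsto (fun k : ℕ => (1:ℝ)/(k+1)) atTop (𝓝 0))
      filter_upwards [this.eventually_le_const hεhalf] with k hk using hk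
    have hev2 : ∀ᶠ k : ℕ in atTop, (K:ℝ) * ‖Tk k - T‖ ≤ (ε:ℝ)/2 := by
      have hd : Tendsto (fun k => (K:ℝ) * ‖Tk k - T‖) atTop (𝓝 ((K:ℝ) * 0)) := by
        refine Tendsto.const_mul _ ?_
        have := (tendsto_iff_norm_sub_tendsto_zero).mp hTlim
        simpa using this
      rw [mul_zero] at hd
      filter_upwards [hd.eventually_le_const hεhalf] with k hk using hk
    obtain ⟨k, hk1, hk2⟩ := (hev1.and hev2).exists
    have hsplit : pLip (fun y => f y - T (φ y)) x
        ≤ pLip (fun y => f y - Tk k (φ y)) x + pLip (fun y => (Tk k - T) (φ y)) x := by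
      refine plip_le_add fun y => ?_
      simp only [edist_eq_coe_nnnorm_sub, ← ENNReal.coe_add, ENNReal.coe_le_coe]
      have hrw : (f x - T (φ x)) - (f y - T (φ y))
          = ((f x - Tk k (φ x)) - (f y - Tk k (φ y)))
            + ((Tk k - T) (φ x) - (Tk k - T) (φ y)) := by
        simp only [ContinuousLinearMap.sub_apply]
        abel
      rw [hrw]
      exact nnnorm_add_le _ _
    have hlip2 : pLip (fun y => (Tk k - T) (φ y)) x ≤ ((‖Tk k - T‖₊ * K : ℝ≥0) : ℝ≥0∞) :=
      plip_le_of_lip ((Tk k - T).lipschitz.comp hφ) x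
    calc pLip (fun y => f y - T (φ y)) x
        ≤ pLip (fun y => f y - Tk k (φ y)) x + pLip (fun y => (Tk k - T) (φ y)) x := hsplit
      _ ≤ ENNReal.ofReal ((ε:ℝ)/2) + ENNReal.ofReal ((ε:ℝ)/2) := by
          refine add_le_add ((hTk k).trans (ENNReal.ofReal_le_ofReal hk1)) ?_
          refine hlip2.trans ?_
          rw [← ENNReal.ofReal_coe_nnreal]
          refine ENNReal.ofReal_le_ofReal ?_
          push_cast
          rw [mul_comm]
          simpa using hk2
      _ = ENNReal.ofReal ((ε:ℝ)/2 + (ε:ℝ)/2) := (ENNReal.ofReal_add hεhalf.le hεhalf.le).symm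
      _ = (ε : ℝ≥0∞) := by
          rw [add_halves, ENNReal.ofReal_coe_nnreal]
  refine ⟨T, hT0, fun S hS => ?_⟩
  have h1 : (c : ℝ≥0∞) * ‖S - T‖₊ ≤ 0 := by
    have := key S T
    rwa [hT0, hS, add_zero] at this
  have h2 : (‖S - T‖₊ : ℝ≥0∞) = 0 := by
    rcases mul_eq_zero.mp (le_zero_iff.mp h1) with hcc | hh
    · exact absurd hcc (by exact_mod_cast hcpos.ne')
    · exact hh
  have h3 : S - T = 0 := nnnorm_eq_zero.mp (ENNReal.coe_eq_zero.mp h2)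
  exact sub_eq_zero.mp h3
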